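/- Let E be a graph and F a topological filter on Path(E). Then G(E) endowed with the topology τ_F, in which every nonzero element is isolated and the sets U_F(0) = {a b^{-1} : a, b ∈ F} ∪ {0} for F ∈ 𝓕 form a neighbourhood base at 0, is a Hausdorff topological inverse semigroup (multiplication and inversion are continuous). -/

import Mathlib

universe u

/-- A directed graph. -/
structure DiGraph : Type (u + 1) where
  V : Type u
  E : Type u
  s : E → V
  r : E → V

namespace DiGraph

variable (G : DiGraph.{u})

/-- A list of edges forms a valid path starting at vertex `v`. -/
def Valid (v : G.V) : List G.E → Prop
  | [] => True
  | e :: l => G.s e = v ∧ Valid (G.r e) l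

/-- the endpoint of a list of edges starting at `v`. -/
def dst (v : G.V) : List G.E → G.V
  | [] => v
  | e :: l => dst (G.r e) l

variable {G}

lemma dst_append (v : G.V) (l₁ l₂ : List G.E) :
    G.dst v (l₁ ++ l₂) = G.dst (G.dst v l₁) l₂ := by
  induction l₁ generalizing v with
  | nil => rfl
  | cons e t ih => simp [dst, ih]

lemma valid_append (v : G.V) (l₁ l₂ : List G.E) :
    G.Valid v (l₁ ++ l₂) ↔ G.Valid v l₁ ∧ G.Valid (G.dst v l₁) l₂ := by
  induction l₁ generalizing v with
  | nil => simp [Valid, dst]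
  | cons e t ih => simp [Valid, dst, ih, and_assoc]

variable (G) in
/-- A (finite, directed) path in `G`: a source vertex together with a
composable list of edges.  Paths of length zero are the vertices. -/
structure GPath : Type u where
  src : G.V
  edges : List G.E
  valid : G.Valid src edges

/-- The range (end vertex) of a path. -/
def GPath.rng (p : G.GPath) : G.V := G.dst p.src p.edges

/-- Concatenation of composable paths. -/
def GPath.comp (p q : G.GPath) (h : p.rng = q.src) : G.GPath :=
  ⟨p.src, p.edges ++ q.edges, by
    rw [valid_append]
    exact ⟨p.valid, by rw [show G.dst p.src p.edges = q.src from h]; exact q.valid⟩⟩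

lemma GPath.comp_rng (p q : G.GPath) (h : p.rng = q.src) : (p.comp q h).rng = q.rng := by
  show G.dst p.src (p.edges ++ q.edges) = _
  rw [dst_append, show G.dst p.src p.edges = q.src from h]; rfl

/-- If `p` is a prefix of the path `q`, the remaining path (so that
`q = p.comp (p.strip q _ _)`). -/
def GPath.strip (p q : G.GPath) (hs : p.src = q.src) (hp : p.edges <+: q.edges) : G.GPath :=
  ⟨p.rng, q.edges.drop p.edges.length, by
    obtain ⟨t, ht⟩ := hp
    have h1 : p.edges ++ q.edges.drop p.edges.length = q.edges := by
      rw [← ht, List.drop_left]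
    have h2 : G.Valid p.src (p.edges ++ q.edges.drop p.edges.length) := by
      rw [h1, hs]; exact q.valid
    exact ((valid_append _ _ _).mp h2).2⟩

lemma GPath.strip_rng (p q : G.GPath) (hs : p.src = q.src) (hp : p.edges <+: q.edges) :
    (p.strip q hs hp).rng = q.rng := by
  show G.dst p.rng (q.edges.drop p.edges.length) = G.dst q.src q.edges
  obtain ⟨t, ht⟩ := hp
  have h1 : p.edges ++ q.edges.drop p.edges.length = q.edges := by
    rw [← ht, List.drop_left]
  conv_rhs => rw [← hs, ← h1]
  rw [dst_append]; rfl

variable (G) in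
/-- A nonzero element `a b⁻¹` of the graph inverse semigroup: a pair of
paths with the same range. -/
structure NZ : Type u where
  a : G.GPath
  b : G.GPath
  h : a.rng = b.rng

/-- The graph inverse semigroup `G(E)` over a directed graph, in normal form:
the elements `a b⁻¹` with `r(a) = r(b)`, together with a zero element. -/
def GIS (G : DiGraph.{u}) : Type u := Option (NZ G)

instance : Zero (GIS G) := ⟨none⟩

open scoped Classical in
/-- The multiplication of the graph inverse semigroup:
`a b⁻¹ · c d⁻¹ = a c₁ d⁻¹` if `c = b c₁`, `a (d b₁)⁻¹` if `b = c b₁`, and `0` otherwise. -/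
noncomputable instance : Mul (GIS G) :=
  ⟨fun x y =>
    match x, y with
    | none, _ => none
    | some _, none => none
    | some ⟨a, b, hab⟩, some ⟨c, d, hcd⟩ =>
      if h : b.src = c.src ∧ b.edges <+: c.edges then
        some ⟨a.comp (b.strip c h.1 h.2) hab, d, by
          exact (GPath.comp_rng _ _ _).trans ((GPath.strip_rng _ _ _ _).trans hcd)⟩
      else if h' : c.src = b.src ∧ c.edges <+: b.edges then
        some ⟨a, d.comp (c.strip b h'.1 h'.2) hcd.symm, by
          exact hab.trans ((GPath.comp_rng _ _ _).trans (GPath.strip_rng _ _ _ _)).symm⟩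
      else none⟩

/-- The nonzero element `a b⁻¹` of `G(E)` determined by a pair of paths
with the same range. -/
def GIS.nz (n : NZ G) : GIS G := some n

/-- The inversion of the graph inverse semigroup: `(u v⁻¹)⁻¹ = v u⁻¹`. -/
def GIS.inv : GIS G → GIS G
  | none => none
  | some ⟨a, b, h⟩ => some ⟨b, a, h.symm⟩

end DiGraph
namespace DiGraph

variable {G : DiGraph.{u}}

/-- membership predicate for the basic neighbourhoods of zero: all of
`a b⁻¹` with `a, b ∈ F`, together with `0`. -/
def inUF (F : Set G.GPath) : GIS G → Prop
  | none => True
  | some n => n.a ∈ F ∧ n.b ∈ F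

/-- The basic neighbourhood `U_F(0) = {a b⁻¹ : a, b ∈ F} ∪ {0}` of zero. -/
def UF (F : Set G.GPath) : Set (GIS G) := {x | inUF F x}

lemma inUF_mono {F₁ F₂ : Set G.GPath} (h : F₁ ⊆ F₂) :
    ∀ x : GIS G, inUF F₁ x → inUF F₂ x := by
  intro x hx
  cases x with
  | none => trivial
  | some n => exact ⟨h hx.1, h hx.2⟩

/-- The topology `τ_𝓕` on `G(E)` determined by a filter `𝓕` on `Path(E)`:
every nonzero element is isolated, and the sets `U_F(0)`, `F ∈ 𝓕`, form a
neighbourhood base at `0`. -/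
def tauF (𝓕 : Filter G.GPath) : TopologicalSpace (GIS G) where
  IsOpen U := (0 : GIS G) ∈ U → ∃ F ∈ 𝓕, UF F ⊆ U
  isOpen_univ := fun _ => ⟨Set.univ, Filter.univ_mem, Set.subset_univ _⟩
  isOpen_inter := fun U V hU hV h0 => by
    obtain ⟨F₁, hF₁, hs₁⟩ := hU h0.1
    obtain ⟨F₂, hF₂, hs₂⟩ := hV h0.2
    exact ⟨F₁ ∩ F₂, Filter.inter_mem hF₁ hF₂, fun x hx =>
      ⟨hs₁ (inUF_mono Set.inter_subset_left x hx),
       hs₂ (inUF_mono Set.inter_subset_right x hx)⟩⟩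
  isOpen_sUnion := fun S hS h0 => by
    obtain ⟨U, hU, h0U⟩ := h0
    obtain ⟨F, hF, hs⟩ := hS U hU h0U
    exact ⟨F, hF, hs.trans (Set.subset_sUnion_of_mem hU)⟩

/-- The prefix partial order on paths: `a ≤ b` iff `b` is a prefix of `a`. -/
def prefLE (a b : G.GPath) : Prop := b.src = a.src ∧ b.edges <+: a.edges

/-- An ideal of `(Path(E), ≤)`: a set `A` with `↓A = A`. -/
def IsIdeal (A : Set G.GPath) : Prop :=
  ∀ a b : G.GPath, prefLE a b → b ∈ A → a ∈ A

/-- A topological filter on `Path(E)`: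
(i) for `F ∈ 𝓕` and paths `a, b` with `r(a) = r(b)`, the set
`F \ {bk : k ∈ Path(E), ak ∉ F}` belongs to `𝓕`;
(ii) `𝓕` contains all cofinite subsets of `Path(E)`;
(iii) `𝓕` has a base consisting of ideals of `(Path(E), ≤)`. -/
def IsTopFilter (𝓕 : Filter G.GPath) : Prop :=
  (∀ F ∈ 𝓕, ∀ a b : G.GPath, a.rng = b.rng →
      F \ {p | ∃ (k : G.GPath) (h1 : b.rng = k.src) (h2 : a.rng = k.src),
        p = b.comp k h1 ∧ a.comp k h2 ∉ F} ∈ 𝓕) ∧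
  𝓕 ≤ Filter.cofinite ∧
  (∀ F ∈ 𝓕, ∃ I ∈ 𝓕, I ⊆ F ∧ IsIdeal I)

variable (G) in
/-- The filter `𝓕_ω` generated by the sets `U_n = {u ∈ Path(E) : |u| > n}`. -/
def Fomega : Filter G.GPath :=
  Filter.generate {S | ∃ n : ℕ, S = {u : G.GPath | n < u.edges.length}}

variable (G) in
/-- `U_n(0) = {u v⁻¹ : min{|u|,|v|} > n} ∪ {0}`. -/
def Un (n : ℕ) : Set (GIS G) := UF {u : G.GPath | n < u.edges.length}

end DiGraph

namespace DiGraph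

variable {G : DiGraph.{u}}

lemma GPath.ext' {p q : G.GPath} (h1 : p.src = q.src) (h2 : p.edges = q.edges) : p = q := by
  cases p; cases q; cases h1; cases h2; rfl

lemma comp_strip (p q : G.GPath) (hs : p.src = q.src) (hp : p.edges <+: q.edges) :
    p.comp (p.strip q hs hp) rfl = q := by
  refine GPath.ext' hs ?_
  show p.edges ++ q.edges.drop p.edges.length = q.edges
  obtain ⟨t, ht⟩ := hp
  rw [← ht, List.drop_left]

lemma zero_mul' (x : GIS G) : (0 : GIS G) * x = 0 := rfl

lemma mul_zero' (x : GIS G) : x * (0 : GIS G) = 0 := by cases x <;> rfl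

open scoped Classical in
lemma mul_some_some (a b c d : G.GPath) (hab : a.rng = b.rng) (hcd : c.rng = d.rng) :
    (GIS.nz ⟨a, b, hab⟩ : GIS G) * GIS.nz ⟨c, d, hcd⟩ =
      if h : b.src = c.src ∧ b.edges <+: c.edges then
        GIS.nz ⟨a.comp (b.strip c h.1 h.2) hab, d, by
          exact (GPath.comp_rng _ _ _).trans ((GPath.strip_rng _ _ _ _).trans hcd)⟩
      else if h' : c.src = b.src ∧ c.edges <+: b.edges then
        GIS.nz ⟨a, d.comp (c.strip b h'.1 h'.2) hcd.symm, by
          exact hab.trans ((GPath.comp_rng _ _ _).trans (GPath.strip_rng _ _ _ _)).symm⟩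
      else 0 := rfl

lemma finite_prefixes (b : G.GPath) : {p : G.GPath | prefLE b p}.Finite := by
  have himg : ((fun p : G.GPath => p.edges) '' {p | prefLE b p}).Finite := by
    apply (b.edges.inits.finite_toSet).subset
    rintro l ⟨p, hp, rfl⟩
    simpa using hp.2
  refine (himg.of_finite_image ?_).subset subset_rfl
  intro p hp q hq he
  exact GPath.ext' (hp.1.trans hq.1.symm) he

lemma compl_prefixes_mem {𝓕 : Filter G.GPath} (h2 : 𝓕 ≤ Filter.cofinite) (b : G.GPath) :
    {p : G.GPath | ¬ prefLE b p} ∈ 𝓕 := by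
  have : {p : G.GPath | prefLE b p}ᶜ ∈ Filter.cofinite := by
    rw [Filter.mem_cofinite, compl_compl]; exact finite_prefixes b
  exact h2 this

/-- Multiplying a fixed nonzero element on the left maps a suitable
`U_{F'}(0)` into `U_F(0)`. -/
lemma lemA {𝓕 : Filter G.GPath} (h : IsTopFilter 𝓕) (a b : G.GPath) (hab : a.rng = b.rng)
    (F : Set G.GPath) (hF : F ∈ 𝓕) :
    ∃ F' ∈ 𝓕, ∀ q ∈ UF F', (GIS.nz ⟨a, b, hab⟩ : GIS G) * q ∈ UF F := by
  refine ⟨(F \ {p | ∃ (k : G.GPath) (h1 : b.rng = k.src) (h2 : a.rng = k.src),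
        p = b.comp k h1 ∧ a.comp k h2 ∉ F}) ∩ {p | ¬ prefLE b p},
    Filter.inter_mem (h.1 F hF a b hab) (compl_prefixes_mem h.2.1 b), ?_⟩
  rintro (_ | ⟨c, d, hcd⟩) hq
  · exact trivial
  · obtain ⟨⟨⟨hcF, hcS⟩, hcT⟩, ⟨hdF, _⟩, _⟩ := hq
    rw [show (some ⟨c, d, hcd⟩ : GIS G) = GIS.nz ⟨c, d, hcd⟩ from rfl, mul_some_some]
    split_ifs with h1 h2
    · refine ⟨?_, hdF⟩
      by_contra hn
      exact hcS ⟨b.strip c h1.1 h1.2, rfl, hab, (comp_strip b c h1.1 h1.2).symm, hn⟩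
    · exact absurd h2 hcT
    · exact trivial

/-- Multiplying a fixed nonzero element on the right maps a suitable
`U_{F'}(0)` into `U_F(0)`. -/
lemma lemB {𝓕 : Filter G.GPath} (h : IsTopFilter 𝓕) (c d : G.GPath) (hcd : c.rng = d.rng)
    (F : Set G.GPath) (hF : F ∈ 𝓕) :
    ∃ F' ∈ 𝓕, ∀ q ∈ UF F', q * (GIS.nz ⟨c, d, hcd⟩ : GIS G) ∈ UF F := by
  refine ⟨(F \ {p | ∃ (k : G.GPath) (h1 : c.rng = k.src) (h2 : d.rng = k.src),
        p = c.comp k h1 ∧ d.comp k h2 ∉ F}) ∩ {p | ¬ prefLE c p},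
    Filter.inter_mem (h.1 F hF d c hcd.symm) (compl_prefixes_mem h.2.1 c), ?_⟩
  rintro (_ | ⟨a, b, hab⟩) hq
  · exact trivial
  · obtain ⟨⟨⟨haF, _⟩, _⟩, ⟨hbF, hbS⟩, hbT⟩ := hq
    rw [show (some ⟨a, b, hab⟩ : GIS G) = GIS.nz ⟨a, b, hab⟩ from rfl, mul_some_some]
    split_ifs with h1 h2
    · exact absurd h1 hbT
    · refine ⟨haF, ?_⟩
      by_contra hn
      exact hbS ⟨c.strip b h2.1 h2.2, rfl, hcd.symm, (comp_strip c b h2.1 h2.2).symm, hn⟩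
    · exact trivial

/-- Products of elements in `U_I(0)` for an ideal `I ⊆ F` lie in `U_F(0)`. -/
lemma lemC {𝓕 : Filter G.GPath} (h : IsTopFilter 𝓕)
    (F : Set G.GPath) (hF : F ∈ 𝓕) :
    ∃ F' ∈ 𝓕, ∀ p q : GIS G, p ∈ UF F' → q ∈ UF F' → p * q ∈ UF F := by
  obtain ⟨I, hI, hIF, hideal⟩ := h.2.2 F hF
  refine ⟨I, hI, ?_⟩
  rintro (_ | ⟨a, b, hab⟩) (_ | ⟨c, d, hcd⟩) hp hq
  · exact trivial
  · exact trivial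
  · exact trivial
  · obtain ⟨ha, hb⟩ := hp
    obtain ⟨hc, hd⟩ := hq
    rw [show (some ⟨a, b, hab⟩ : GIS G) = GIS.nz ⟨a, b, hab⟩ from rfl,
      show (some ⟨c, d, hcd⟩ : GIS G) = GIS.nz ⟨c, d, hcd⟩ from rfl, mul_some_some]
    split_ifs with h1 h2
    · exact ⟨hIF (hideal _ a ⟨rfl, List.prefix_append _ _⟩ ha), hIF hd⟩
    · exact ⟨hIF ha, hIF (hideal _ d ⟨rfl, List.prefix_append _ _⟩ hd)⟩
    · exact trivial

end DiGraph

open DiGraph in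
/-- Let `E` be a graph and `𝓕` a (free, proper) topological filter on
`Path(E)`. Then `G(E)` endowed with the topology `τ_𝓕` — in which every
nonzero element is isolated and the sets `U_F(0) = {a b⁻¹ : a, b ∈ F} ∪ {0}`,
`F ∈ 𝓕`, form a neighbourhood base at `0` — is a Hausdorff topological
inverse semigroup: multiplication and inversion are continuous. -/
theorem tauF_topological_inverse_semigroup (G : DiGraph.{u})
    (𝓕 : Filter G.GPath) [𝓕.NeBot] (h : IsTopFilter 𝓕) :
    @T2Space (GIS G) (tauF 𝓕) ∧
    @Continuous (GIS G × GIS G) (GIS G)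
      (@instTopologicalSpaceProd _ _ (tauF 𝓕) (tauF 𝓕)) (tauF 𝓕)
      (fun p => p.1 * p.2) ∧
    @Continuous (GIS G) (GIS G) (tauF 𝓕) (tauF 𝓕) GIS.inv := by
  letI : TopologicalSpace (GIS G) := tauF 𝓕
  -- basic facts about the topology
  have hop : ∀ F ∈ 𝓕, IsOpen (UF F) := fun F hF _ => ⟨F, hF, subset_rfl⟩
  have hsingle : ∀ n : NZ G, IsOpen ({some n} : Set (GIS G)) := by
    intro n h0
    exact (Option.some_ne_none n (Set.mem_singleton_iff.mp h0 : (none : Option (NZ G)) = some n).symm).elim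
  have hnhds_some : ∀ n : NZ G, nhds (GIS.nz n) = pure (GIS.nz n) := fun n =>
    le_antisymm (Filter.le_pure_iff.mpr ((hsingle n).mem_nhds rfl)) (pure_le_nhds _)
  have hmem0 : ∀ s : Set (GIS G), s ∈ nhds (0 : GIS G) ↔ ∃ F ∈ 𝓕, UF F ⊆ s := by
    intro s
    constructor
    · intro hs
      obtain ⟨t, hts, hto, h0t⟩ := mem_nhds_iff.mp hs
      obtain ⟨F, hF, hsub⟩ := hto h0t
      exact ⟨F, hF, hsub.trans hts⟩
    · rintro ⟨F, hF, hsub⟩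
      exact Filter.mem_of_superset ((hop F hF).mem_nhds trivial) hsub
  have hcompl : ∀ p : G.GPath, ({p}ᶜ : Set G.GPath) ∈ 𝓕 := by
    intro p
    apply h.2.1
    rw [Filter.mem_cofinite, compl_compl]
    exact Set.finite_singleton _
  refine ⟨⟨?_⟩, ?_, ?_⟩
  · -- Hausdorff
    intro x y hxy
    match x, y with
    | some m, some k =>
        exact ⟨{some m}, {some k}, hsingle m, hsingle k, rfl, rfl, by
          refine Set.disjoint_singleton.mpr ?_
          exact hxy⟩
    | none, some k =>
        refine ⟨UF {k.a}ᶜ, {some k}, hop _ (hcompl k.a), hsingle k, trivial, rfl, ?_⟩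
        refine Set.disjoint_singleton_right.mpr ?_
        exact fun hm => hm.1 rfl
    | some m, none =>
        refine ⟨{some m}, UF {m.a}ᶜ, hsingle m, hop _ (hcompl m.a), rfl, trivial, ?_⟩
        refine Set.disjoint_singleton_left.mpr ?_
        exact fun hm => hm.1 rfl
    | none, none => exact absurd rfl hxy
  · -- continuity of multiplication
    rw [continuous_iff_continuousAt]
    rintro ⟨x, y⟩
    match x, y with
    | some m, some k =>
        have hpp : nhds ((GIS.nz m, GIS.nz k)) = pure (GIS.nz m, GIS.nz k) := by
          rw [nhds_prod_eq, hnhds_some, hnhds_some, Filter.pure_prod, Filter.map_pure]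
        have key := tendsto_pure_nhds (fun p : GIS G × GIS G => p.1 * p.2) (GIS.nz m, GIS.nz k)
        rwa [← hpp] at key
    | some m, none =>
        have key : Filter.Tendsto (fun p : GIS G × GIS G => p.1 * p.2)
            (nhds (GIS.nz m, (0 : GIS G))) (nhds (GIS.nz m * (0 : GIS G))) := by
          rw [Filter.tendsto_def, nhds_prod_eq]
          intro s hs
          obtain ⟨F, hF, hsub⟩ := (hmem0 s).mp hs
          obtain ⟨F', hF', hmul⟩ := lemA h m.a m.b m.h F hF
          refine Filter.mem_of_superset (Filter.prod_mem_prod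
            ((hsingle m).mem_nhds rfl) ((hmem0 _).mpr ⟨F', hF', subset_rfl⟩)) ?_
          rintro ⟨p, q⟩ ⟨hp, hq⟩
          have hp := Set.mem_singleton_iff.mp hp
          subst hp
          exact hsub (hmul q hq)
        exact key
    | none, some k =>
        have key : Filter.Tendsto (fun p : GIS G × GIS G => p.1 * p.2)
            (nhds ((0 : GIS G), GIS.nz k)) (nhds ((0 : GIS G) * GIS.nz k)) := by
          rw [Filter.tendsto_def, nhds_prod_eq]
          intro s hs
          obtain ⟨F, hF, hsub⟩ := (hmem0 s).mp hs
          obtain ⟨F', hF', hmul⟩ := lemB h k.a k.b k.h F hF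
          refine Filter.mem_of_superset (Filter.prod_mem_prod
            ((hmem0 _).mpr ⟨F', hF', subset_rfl⟩) ((hsingle k).mem_nhds rfl)) ?_
          rintro ⟨p, q⟩ ⟨hp, hq⟩
          have hq := Set.mem_singleton_iff.mp hq
          subst hq
          exact hsub (hmul p hp)
        exact key
    | none, none =>
        have key : Filter.Tendsto (fun p : GIS G × GIS G => p.1 * p.2)
            (nhds ((0 : GIS G), (0 : GIS G))) (nhds ((0 : GIS G) * (0 : GIS G))) := by
          rw [Filter.tendsto_def, nhds_prod_eq]
          intro s hs
          obtain ⟨F, hF, hsub⟩ := (hmem0 s).mp hs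
          obtain ⟨F', hF', hmul⟩ := lemC h F hF
          refine Filter.mem_of_superset (Filter.prod_mem_prod
            ((hmem0 _).mpr ⟨F', hF', subset_rfl⟩) ((hmem0 _).mpr ⟨F', hF', subset_rfl⟩)) ?_
          rintro ⟨p, q⟩ ⟨hp, hq⟩
          exact hsub (hmul p q hp hq)
        exact key
  · -- continuity of inversion
    rw [continuous_iff_continuousAt]
    intro x
    match x with
    | some n =>
        have key := tendsto_pure_nhds (GIS.inv : GIS G → GIS G) (GIS.nz n)
        rwa [← hnhds_some n] at key
    | none =>
        have key : Filter.Tendsto (GIS.inv : GIS G → GIS G)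
            (nhds (0 : GIS G)) (nhds (GIS.inv (0 : GIS G))) := by
          rw [Filter.tendsto_def]
          intro s hs
          obtain ⟨F, hF, hsub⟩ := (hmem0 s).mp hs
          refine Filter.mem_of_superset ((hmem0 _).mpr ⟨F, hF, subset_rfl⟩) ?_
          rintro (_ | ⟨a, b, hab⟩) hq
          · exact hsub trivial
          · exact hsub ⟨hq.2, hq.1⟩
        exact key
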